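/- Let T : X → X be a continuous map of a compact metric space and f : X → ℝ continuous, with I^{(0,…,k)}_{T,f} a trajectory-embedding. Then the topological entropy of T equals the topological entropy of the shift map σ restricted to the closure-free image I_{T,f}(X) of the infinite delay observation map (which is a compact invariant subset of ℝ^ℕ). -/

import Mathlib

open Dynamics

open Set Uniformity Function ENNReal EReal Filter in
/-- Uniform version of the collapsing hypothesis, obtained by compactness. -/
lemma collapse_uniform {X : Type*} [MetricSpace X] [CompactSpace X]
    (T : X → X) (hT : Continuous T) (f : X → ℝ) (hf : Continuous f) (k : ℕ)
    (h : ∀ x y : X, (∀ j ≤ k, f (T^[j] x) = f (T^[j] y)) → T^[k] x = T^[k] y)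
    {δ : ℝ} (hδ : 0 < δ) :
    ∃ ε > 0, ∀ x y : X, (∀ j ≤ k, dist (f (T^[j] x)) (f (T^[j] y)) < ε) →
      dist (T^[k] x) (T^[k] y) < δ := by
  set g : X × X → ℝ := fun p => ∑ j ∈ Finset.range (k + 1),
    dist (f (T^[j] p.1)) (f (T^[j] p.2)) with hg
  have hgc : Continuous g := by
    apply continuous_finset_sum
    intro j _
    exact ((hf.comp (hT.iterate j)).comp continuous_fst).dist
      ((hf.comp (hT.iterate j)).comp continuous_snd)
  set K : Set (X × X) := {p | δ ≤ dist (T^[k] p.1) (T^[k] p.2)} with hK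
  have hKc : IsClosed K := isClosed_le continuous_const
    (((hT.iterate k).comp continuous_fst).dist ((hT.iterate k).comp continuous_snd))
  have hKcomp : IsCompact K := hKc.isCompact
  rcases K.eq_empty_or_nonempty with hKe | hKne
  · refine ⟨1, one_pos, fun x y _ => ?_⟩
    by_contra hcon
    have : (x, y) ∈ K := not_lt.1 hcon
    simp [hKe] at this
  · obtain ⟨p₀, hp₀K, hp₀min⟩ := hKcomp.exists_isMinOn hKne hgc.continuousOn
    have hgp₀ : 0 < g p₀ := by
      rcases lt_or_eq_of_le (Finset.sum_nonneg fun j _ => dist_nonneg : 0 ≤ g p₀) with h' | h'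
      · exact h'
      · exfalso
        have hzero : ∀ j ≤ k, f (T^[j] p₀.1) = f (T^[j] p₀.2) := by
          intro j hj
          have := (Finset.sum_eq_zero_iff_of_nonneg (fun j _ => dist_nonneg)).1 h'.symm j
            (Finset.mem_range.2 (Nat.lt_succ_of_le hj))
          exact dist_eq_zero.1 this
        have := h p₀.1 p₀.2 hzero
        have hd : dist (T^[k] p₀.1) (T^[k] p₀.2) = 0 := by rw [this, dist_self]
        have := hp₀K
        rw [hK, mem_setOf_eq, hd] at this
        linarith
    refine ⟨g p₀ / (k + 1), by positivity, fun x y hxy => ?_⟩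
    by_contra hcon
    have hxyK : (x, y) ∈ K := not_lt.1 hcon
    have hle : g p₀ ≤ g (x, y) := hp₀min hxyK
    have hlt : g (x, y) < g p₀ := by
      calc g (x, y) < ∑ _j ∈ Finset.range (k + 1), g p₀ / (k + 1) := by
            apply Finset.sum_lt_sum_of_nonempty ⟨0, Finset.mem_range.2 (Nat.succ_pos k)⟩
            intro j hj
            exact hxy j (Nat.lt_succ_iff.1 (Finset.mem_range.1 hj))
        _ = g p₀ := by
            rw [Finset.sum_const, Finset.card_range, _root_.nsmul_eq_mul]
            push_cast
            field_simp
    linarith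

open Set Uniformity Function ENNReal EReal Filter in
open scoped SetRel in
theorem entropy_preserved_by_delay_observation {X : Type*} [MetricSpace X] [CompactSpace X]
    (T : X → X) (hT : Continuous T) (f : X → ℝ) (hf : Continuous f) (k : ℕ)
    (h : ∀ x y : X, (∀ j ≤ k, f (T^[j] x) = f (T^[j] y)) → T^[k] x = T^[k] y) :
    coverEntropy T (Set.univ : Set X)
      = coverEntropy (fun s : ℕ → ℝ => fun i : ℕ => s (i + 1))
          (Set.range fun x : X => fun i : ℕ => f (T^[i] x)) := by
  classical
  rcases isEmpty_or_nonempty X with hX | hX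
  · rw [Set.univ_eq_empty_iff.2 hX, Set.range_eq_empty, coverEntropy_empty, coverEntropy_empty]
  set φ : X → ℕ → ℝ := fun x i => f (T^[i] x) with hφdef
  set σ : (ℕ → ℝ) → ℕ → ℝ := fun s i => s (i + 1) with hσdef
  have hsc : Function.Semiconj φ T σ := by
    intro x
    funext i
    simp only [φ, σ, ← Function.iterate_succ_apply]
  have hφc : Continuous φ := continuous_pi fun i => hf.comp (hT.iterate i)
  have hφu : UniformContinuous φ := CompactSpace.uniformContinuous_of_continuous hφc
  have himg : (Set.range fun x : X => fun i : ℕ => f (T^[i] x)) = φ '' Set.univ :=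
    Set.image_univ.symm
  rw [himg, coverEntropy_image_of_comap _ hsc Set.univ]
  apply le_antisymm
  · -- hard direction : entropy for the ambient uniformity ≤ entropy for the comap uniformity
    refine iSup₂_le fun U hU => ?_
    obtain ⟨W, hW, hWs, hWU⟩ := comp_symm_mem_uniformity_sets hU
    refine (coverEntropyEntourage_antitone T Set.univ hWU).trans ?_
    obtain ⟨δ, hδ, hδW⟩ := Metric.mem_uniformity_dist.1 hW
    obtain ⟨ε, hε, hkey⟩ := collapse_uniform T hT f hf k h hδ
    -- the comap entourage
    set V : Set (X × X) := (Prod.map φ φ) ⁻¹' {q : (ℕ → ℝ) × (ℕ → ℝ) | dist (q.1 0) (q.2 0) < ε}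
      with hVdef
    have hVc : V ∈ 𝓤[(inferInstance : UniformSpace (ℕ → ℝ)).comap φ] := by
      rw [uniformity_comap φ, Filter.mem_comap]
      refine ⟨{q : (ℕ → ℝ) × (ℕ → ℝ) | dist (q.1 0) (q.2 0) < ε}, ?_, Set.Subset.rfl⟩
      exact uniformContinuous_def.1 (Pi.uniformContinuous_proj (fun _ : ℕ => ℝ) 0)
        _ (Metric.dist_mem_uniformity hε)
    have hVmem : ∀ a b : X, (a, b) ∈ V ↔ dist (f a) (f b) < ε := by
      intro a b
      simp [hVdef, φ]
    -- a finite (k, W)-cover of univ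
    obtain ⟨t, ht⟩ := exists_isDynCoverOf_of_isCompact_invariant isCompact_univ
      (Set.mapsTo_univ T Set.univ) hW k
    have ht_ne : t.Nonempty := by
      have := ht.nonempty (Set.univ_nonempty)
      exact Finset.coe_nonempty.1 this
    have ht_card : 1 ≤ t.card := Finset.card_pos.2 ht_ne
    -- key cardinality estimate
    have hcard : ∀ n : ℕ, coverMincard T Set.univ (W ○ W) n
        ≤ coverMincard T Set.univ V n * (t.card : ℕ∞) := by
      intro n
      rcases eq_top_or_lt_top (coverMincard T Set.univ V n) with htop | hfin
      · rw [htop, ENat.top_mul (by exact_mod_cast Nat.one_le_iff_ne_zero.1 ht_card)]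
        exact le_top
      obtain ⟨s, hs, hs_card⟩ := (coverMincard_finite_iff T Set.univ V n).1 hfin
      -- choose a witness in each nonempty intersection of dynamical balls
      set E : X → X → X := fun c d =>
        if hcd : (UniformSpace.ball c (dynEntourage T V n)
            ∩ UniformSpace.ball d (dynEntourage T W k)).Nonempty then hcd.some else c with hE
      have hcover : IsDynCoverOf T Set.univ (W ○ W) n
          ((s ×ˢ t).image fun p : X × X => E p.1 p.2) := by
        intro x _
        have hxs := hs (Set.mem_univ x)
        simp only [Set.mem_iUnion, Finset.mem_coe, exists_prop] at hxs
        obtain ⟨c, hcs, hxc⟩ := hxs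
        have hxt := ht (Set.mem_univ x)
        simp only [Set.mem_iUnion, Finset.mem_coe, exists_prop] at hxt
        obtain ⟨d, hdt, hxd⟩ := hxt
        have hne : (UniformSpace.ball c (dynEntourage T V n)
            ∩ UniformSpace.ball d (dynEntourage T W k)).Nonempty :=
            ⟨x, mem_dynEntourage.2 fun i hi => (hVmem _ _).2 (by
              rw [dist_comm]; exact (hVmem _ _).1 (mem_dynEntourage.1 hxc i hi)),
              mem_dynEntourage.2 fun i hi => hWs.symm _ _ (mem_dynEntourage.1 hxd i hi)⟩
        have heE : E c d = hne.some := dif_pos hne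
        have heint := hne.some_mem
        rw [← heE] at heint
        obtain ⟨hec, hed⟩ := heint
        -- unfold the information we have
        have hxcV : ∀ i < n, dist (f (T^[i] c)) (f (T^[i] x)) < ε := by
          intro i hi
          have := mem_dynEntourage.1 hxc i hi
          rw [dist_comm]; exact (hVmem _ _).1 this
        have hecV : ∀ i < n, dist (f (T^[i] c)) (f (T^[i] (E c d))) < ε := by
          intro i hi
          have := mem_dynEntourage.1 hec i hi
          exact (hVmem _ _).1 this
        have hxdW : ∀ i < k, (T^[i] d, T^[i] x) ∈ W := fun i hi => hWs.symm _ _ (mem_dynEntourage.1 hxd i hi)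
        have hedW : ∀ i < k, (T^[i] d, T^[i] (E c d)) ∈ W :=
          fun i hi => mem_dynEntourage.1 hed i hi
        -- x belongs to the (W ○ W)-dynamical ball centered at E c d
        simp only [Set.mem_iUnion, Finset.coe_image, Set.mem_image, Finset.mem_coe,
          exists_prop]
        refine ⟨E c d, ⟨(c, d), Finset.mem_product.2 ⟨hcs, hdt⟩, rfl⟩, ?_⟩
        rw [mem_dynEntourage]
        intro i hi
        by_cases hik : i < k
        · exact SetRel.prodMk_mem_comp (hWs.symm _ _ (hxdW i hik)) (hedW i hik)
        · push_neg at hik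
          -- use the collapsing estimate through c
          have haux : ∀ z : X, (∀ m < n, dist (f (T^[m] c)) (f (T^[m] z)) < ε) →
              dist (T^[i] c) (T^[i] z) < δ := by
            intro z hz
            have happ := hkey (T^[i - k] c) (T^[i - k] z) ?_
            · rwa [← Function.iterate_add_apply, ← Function.iterate_add_apply,
                Nat.add_sub_cancel' hik] at happ
            · intro j hj
              rw [← Function.iterate_add_apply, ← Function.iterate_add_apply]
              apply hz
              have : j + (i - k) ≤ i := by omega
              omega
          have h1 : dist (T^[i] c) (T^[i] x) < δ := haux x hxcV
          have h2 : dist (T^[i] c) (T^[i] (E c d)) < δ := haux (E c d) hecV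
          exact SetRel.prodMk_mem_comp (hWs.symm _ _ (hδW h1)) (hδW h2)
      -- conclude the cardinality bound
      have hle := hcover.coverMincard_le_card
      apply hle.trans
      have : ((s ×ˢ t).image fun p : X × X => E p.1 p.2).card ≤ s.card * t.card :=
        Finset.card_image_le.trans (le_of_eq (Finset.card_product s t))
      calc (((s ×ˢ t).image fun p : X × X => E p.1 p.2).card : ℕ∞)
          ≤ ((s.card * t.card : ℕ) : ℕ∞) := by exact_mod_cast this
        _ = (s.card : ℕ∞) * (t.card : ℕ∞) := by push_cast; ring
        _ = coverMincard T Set.univ V n * (t.card : ℕ∞) := by rw [hs_card]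
    -- pass to entropies
    have hloglog : ∀ n : ℕ, log (coverMincard T Set.univ (W ○ W) n) / (n : EReal)
        ≤ log (coverMincard T Set.univ V n) / (n : EReal) + log (t.card : ℝ≥0∞) / (n : EReal) := by
      intro n
      have h1 : log (coverMincard T Set.univ (W ○ W) n)
          ≤ log (coverMincard T Set.univ V n) + log (t.card : ℝ≥0∞) := by
        have := log_monotone (ENat.toENNReal_mono (hcard n))
        apply this.trans_eq
        rw [ENat.toENNReal_mul, log_mul_add]
        norm_cast
      have h2 := monotone_div_right_of_nonneg (Nat.cast_nonneg' (α := EReal) n) h1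
      apply h2.trans_eq
      apply div_right_distrib_of_nonneg
      · exact zero_le_log_iff.2 (by
          exact_mod_cast (one_le_coverMincard_iff T Set.univ V n).2 Set.univ_nonempty)
      · exact zero_le_log_iff.2 (by exact_mod_cast ht_card)
    have hlim : coverEntropyEntourage T Set.univ (W ○ W)
        ≤ coverEntropyEntourage T Set.univ V := by
      have hv0 : atTop.limsup (fun n : ℕ => log (t.card : ℝ≥0∞) / (n : EReal)) = 0 := by
        apply Filter.Tendsto.limsup_eq
        apply EReal.tendsto_const_div_atTop_nhds_zero_nat
        · intro hb
          rw [log_eq_bot_iff] at hb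
          exact absurd hb (by exact_mod_cast (Nat.one_le_iff_ne_zero.1 ht_card))
        · intro htp
          rw [log_eq_top_iff] at htp
          exact ENNReal.natCast_ne_top t.card htp
      have hle : coverEntropyEntourage T Set.univ (W ○ W)
          ≤ atTop.limsup ((fun n : ℕ => log (coverMincard T Set.univ V n) / (n : EReal))
            + fun n : ℕ => log (t.card : ℝ≥0∞) / (n : EReal)) :=
        limsup_le_limsup (Filter.Eventually.of_forall hloglog)
      apply hle.trans
      have haux := @EReal.limsup_add_le ℕ atTop
        (fun n : ℕ => log (coverMincard T Set.univ V n) / (n : EReal))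
        (fun n : ℕ => log (t.card : ℝ≥0∞) / (n : EReal))
        (Or.inr (by rw [hv0]; exact EReal.zero_ne_top))
        (Or.inr (by rw [hv0]; exact EReal.zero_ne_bot))
      apply haux.trans_eq
      rw [hv0, add_zero]
      rfl
    exact hlim.trans
      (@coverEntropyEntourage_le_coverEntropy X V ((inferInstance :
        UniformSpace (ℕ → ℝ)).comap φ) T Set.univ hVc)
  · -- easy direction : comap uniformity is coarser
    exact coverEntropy_antitone T Set.univ (uniformContinuous_iff.1 hφu)
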